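/- In the Laurent polynomial ring ℤ[a, a⁻¹], there is no integer k and no sign ε ∈ {1, −1} such that 8(a − 1)(a + 1)³ = ε·a^k·8(a − 1)³(a + 1). -/

import Mathlib

open LaurentPolynomial

noncomputable def u2 : ℚˣ := Units.mk0 2 two_ne_zero

noncomputable def ev2 : LaurentPolynomial ℤ →ₐ[ℤ] ℚ :=
  AddMonoidAlgebra.lift ℤ ℚ ℤ ((Units.coeHom ℚ).comp (zpowersHom ℚˣ u2))

lemma ev2_T (n : ℤ) : ev2 (T n) = (2:ℚ) ^ n := by
  rw [ev2, T, AddMonoidAlgebra.lift_single]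
  simp [u2]

lemma ev2_C (z : ℤ) : ev2 (C z) = (z : ℚ) := by
  have : (C z : LaurentPolynomial ℤ) = AddMonoidAlgebra.single 0 z := rfl
  rw [this, ev2, AddMonoidAlgebra.lift_single]
  simp

/-- In `ℤ[a, a⁻¹]`, the Laurent polynomials `8(a−1)(a+1)³` and `8(a−1)³(a+1)`
are not equal up to multiplication by a unit `±aᵏ`. -/
theorem veering_polynomials_distinct :
    ¬ ∃ (k : ℤ) (ε : ℤ), (ε = 1 ∨ ε = -1) ∧
      (8 * (LaurentPolynomial.T 1 - 1) * (LaurentPolynomial.T 1 + 1)^3 :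
          LaurentPolynomial ℤ) =
        LaurentPolynomial.C ε * LaurentPolynomial.T k *
          (8 * (LaurentPolynomial.T 1 - 1)^3 * (LaurentPolynomial.T 1 + 1)) := by
  rintro ⟨k, ε, hε, h⟩
  have h2 := congrArg ev2 h
  simp only [map_mul, map_sub, map_add, map_pow, map_one, map_ofNat,
    ev2_T, ev2_C, zpow_one] at h2
  norm_num at h2
  -- h2 : 216 = ε * 2^k * 24
  have hpos : (0:ℚ) < (2:ℚ) ^ k := zpow_pos (by norm_num) k
  have h9 : (2:ℚ) ^ k = 9 := by
    rcases hε with rfl | rfl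
    · push_cast at h2; linarith
    · push_cast at h2; nlinarith
  have h3 : (3:ℤ) < k := by
    have := (zpow_lt_zpow_iff_right₀ (by norm_num : (1:ℚ) < 2)).mp
      (by rw [h9]; norm_num : (2:ℚ) ^ (3:ℤ) < (2:ℚ) ^ k)
    exact this
  have h4 : k < (4:ℤ) := by
    have := (zpow_lt_zpow_iff_right₀ (by norm_num : (1:ℚ) < 2)).mp
      (by rw [h9]; norm_num : (2:ℚ) ^ k < (2:ℚ) ^ (4:ℤ))
    exact this
  omega
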